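/- Let N ≥ 2 and K ≥ 1, and let (w, P) be a configuration with confidence e. If e = 1, then for every function f : ℝ → ℝ the f-impurity satisfies I = f(1) + (N−1)·f(0). (Equality case e = 1 of Theorem 2: the upper bound u(e) is attained.) -/
import Mathlib


open Finset

/-- The maximum of a real-valued vector over the finite index set `Fin N` (`N > 0`). -/
noncomputable def colMax {N : ℕ} (hN : 0 < N) (v : Fin N → ℝ) : ℝ :=
  Finset.univ.sup' (Finset.univ_nonempty_iff.mpr ⟨⟨0, hN⟩⟩) v

/-- Equality case `e = 1` of Theorem 2: if the confidence equals `1`, then the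
`f`-impurity equals `f(1) + (N-1) * f(0)` for every `f`. -/
theorem confidence_eq_one (N K : ℕ) (hN : 2 ≤ N) (hK : 1 ≤ K)
    (w : Fin K → ℝ) (hw : ∀ k, 0 ≤ w k) (hws : ∑ k, w k = 1)
    (P : Fin K → Fin N → ℝ) (hP : ∀ k i, 0 ≤ P k i) (hPs : ∀ k, ∑ i, P k i = 1)
    (e : ℝ) (he : e = ∑ k, w k * colMax (by omega) (P k))
    (heq : e = 1) :
    ∀ f : ℝ → ℝ, ∑ k, ∑ i, w k * f (P k i) = f 1 + ((N : ℝ) - 1) * f 0 := by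
  intro f
  have hN0 : 0 < N := by omega
  -- colMax ≤ 1 for each k
  have hmax_le : ∀ k, colMax hN0 (P k) ≤ 1 := by
    intro k
    obtain ⟨i0, _, hi0⟩ := Finset.exists_mem_eq_sup' (Finset.univ_nonempty_iff.mpr ⟨⟨0, hN0⟩⟩) (P k)
    rw [colMax, hi0, ← hPs k]
    exact Finset.single_le_sum (fun i _ => hP k i) (Finset.mem_univ i0)
  -- each w k * (1 - colMax) = 0
  have hzero : ∀ k ∈ Finset.univ, w k * (1 - colMax hN0 (P k)) = 0 := by
    rw [← Finset.sum_eq_zero_iff_of_nonneg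
      (fun k _ => mul_nonneg (hw k) (by linarith [hmax_le k]))]
    have : ∑ k, w k * (1 - colMax hN0 (P k)) = (∑ k, w k) - ∑ k, w k * colMax hN0 (P k) := by
      rw [← Finset.sum_sub_distrib]
      congr 1; ext k; ring
    rw [this, hws, ← he, heq]; ring
  -- key: w k * (∑ i f (P k i)) = w k * (f 1 + (N-1) f 0)
  have key : ∀ k, ∑ i, w k * f (P k i) = w k * (f 1 + ((N:ℝ) - 1) * f 0) := by
    intro k
    rcases eq_or_lt_of_le (hw k) with h0 | h0
    · simp [← h0]
    · have hmax1 : colMax hN0 (P k) = 1 := by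
        have := hzero k (Finset.mem_univ k)
        rcases mul_eq_zero.mp this with h | h
        · exact absurd h h0.ne'
        · linarith
      obtain ⟨i0, _, hi0⟩ := Finset.exists_mem_eq_sup' (Finset.univ_nonempty_iff.mpr ⟨⟨0, hN0⟩⟩) (P k)
      have hPi0 : P k i0 = 1 := by rw [← hi0, ← hmax1]; rfl
      have hrest : ∀ i ∈ Finset.univ \ {i0}, P k i = 0 := by
        have hsum : ∑ i ∈ Finset.univ \ {i0}, P k i = 0 := by
          rw [Finset.sum_sdiff_eq_sub (Finset.subset_univ {i0}), hPs k]
          simp [hPi0]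
        intro i hi
        exact (Finset.sum_eq_zero_iff_of_nonneg (fun j _ => hP k j)).mp hsum i hi
      rw [← Finset.mul_sum]
      congr 1
      rw [← Finset.sum_sdiff (Finset.subset_univ {i0})]
      have : ∑ i ∈ Finset.univ \ {i0}, f (P k i) = ((N:ℝ) - 1) * f 0 := by
        rw [Finset.sum_congr rfl (fun i hi => by rw [hrest i hi])]
        simp [Finset.card_sdiff_of_subset, mul_comm]
        push_cast [Nat.cast_sub (by omega : 1 ≤ N)]
        ring
      rw [this]
      simp [hPi0]
      ring
  calc ∑ k, ∑ i, w k * f (P k i) = ∑ k, w k * (f 1 + ((N:ℝ) - 1) * f 0) := by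
        exact Finset.sum_congr rfl (fun k _ => key k)
    _ = (∑ k, w k) * (f 1 + ((N:ℝ) - 1) * f 0) := by rw [Finset.sum_mul]
    _ = _ := by rw [hws]; ring
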